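/- arXiv:1203.6610 — 2 statements merged into one kernel-verified Lean document; each statement's English description precedes it below -/
import Mathlib

section
/- Suppose |B| ≥ 2 and |S| ≥ 2. Let π̂ be a single-seller partition that is revenue-maximizing and satisfies SW(π̂) ≥ SW(π') for every revenue-maximizing partition π'. Then for every seller profile τ and every buyer assignment σ in the |S|-seller game, |S|·SW(τ,σ) ≤ min(|S|,|B|)·SW(π̂); in particular SW(τ,σ) ≤ SW(π̂), so competition cannot yield higher welfare than such a monopolist. -/
open Finset

variable {B G S : Type*} [Fintype B] [Fintype G] [Fintype S]
variable [DecidableEq B] [DecidableEq G] [DecidableEq S]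

/-- `v_b(Ḡ)`: buyer `b`'s total valuation of the variants in `Ḡ`. -/
def vsum (v : B → G → ℕ) (b : B) (Gb : Finset G) : ℕ := ∑ g ∈ Gb, v b g

/-- `V̄1(B̄,Ḡ)`: the largest value among `(v_b(Ḡ))_{b∈B̄}` (`0` if `B̄ = ∅`). -/
def V1 (v : B → G → ℕ) (Bb : Finset B) (Gb : Finset G) : ℕ :=
  Bb.sup (fun b => vsum v b Gb)

/-- `V̄2(B̄,Ḡ)`: the second-largest value, counted with multiplicity
(`0` if `|B̄| ≤ 1`).  It equals the minimum, over removal of one buyer,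
of the maximum over the remaining buyers. -/
def V2 (v : B → G → ℕ) (Bb : Finset B) (Gb : Finset G) : ℕ :=
  if h : Bb.Nonempty then Bb.inf' h (fun b => V1 v (Bb.erase b) Gb) else 0

/-- The set of buyers choosing seller `s` under the assignment `σ`. -/
def buyersOf (σ : B → S) (s : S) : Finset B := univ.filter (fun b => σ b = s)

/-- Buyer `b`'s utility in the multi-seller game. -/
def ubuyer (v : B → G → ℕ) (τ : S → Finpartition (univ : Finset G)) (σ : B → S) (b : B) : ℚ :=
  (Fintype.card G : ℚ)⁻¹ *
    ∑ Gb ∈ (τ (σ b)).parts, max ((vsum v b Gb : ℚ) - (V2 v (buyersOf σ (σ b)) Gb : ℚ)) 0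

/-- Seller `s`'s utility in the multi-seller game. -/
def useller (v : B → G → ℕ) (τ : S → Finpartition (univ : Finset G)) (σ : B → S) (s : S) : ℚ :=
  (Fintype.card G : ℚ)⁻¹ * ∑ Gb ∈ (τ s).parts, (V2 v (buyersOf σ s) Gb : ℚ)

/-- Social welfare in the multi-seller game. -/
def SWm (v : B → G → ℕ) (τ : S → Finpartition (univ : Finset G)) (σ : B → S) : ℚ :=
  ((Fintype.card S : ℚ) * (Fintype.card G : ℚ))⁻¹ *
    ∑ s : S, ∑ Gb ∈ (τ s).parts, (V1 v (buyersOf σ s) Gb : ℚ)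

/-- Social welfare in the single-seller (monopoly) game. -/
def SW1 (v : B → G → ℕ) (π : Finpartition (univ : Finset G)) : ℚ :=
  (Fintype.card G : ℚ)⁻¹ * ∑ Gb ∈ π.parts, (V1 v (univ : Finset B) Gb : ℚ)

/-- The monopolist's revenue. -/
def rev1 (v : B → G → ℕ) (π : Finpartition (univ : Finset G)) : ℚ :=
  (Fintype.card G : ℚ)⁻¹ * ∑ Gb ∈ π.parts, (V2 v (univ : Finset B) Gb : ℚ)

/-- Buyer `b`'s utility in the monopoly game. -/
def ub1 (v : B → G → ℕ) (π : Finpartition (univ : Finset G)) (b : B) : ℚ :=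
  (Fintype.card G : ℚ)⁻¹ *
    ∑ Gb ∈ π.parts, max ((vsum v b Gb : ℚ) - (V2 v (univ : Finset B) Gb : ℚ)) 0

/-- `π` refines `π̂`: every block of `π̂` is a union of blocks of `π`. -/
def IsRefinement (π πhat : Finpartition (univ : Finset G)) : Prop :=
  ∀ t ∈ πhat.parts, ∃ P ⊆ π.parts, t = P.sup id

/-- `σ` is a (pure) Nash equilibrium of the buyers' subgame induced by `τ`. -/
def IsNash (v : B → G → ℕ) (τ : S → Finpartition (univ : Finset G)) (σ : B → S) : Prop :=
  ∀ (b : B) (s : S), ubuyer v τ (Function.update σ b s) b ≤ ubuyer v τ σ b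

/-- `p^i(G)`: the number of goods demanded by at least `i` buyers. -/
def pdem (v : B → G → ℕ) (i : ℕ) : ℕ :=
  (univ.filter (fun g : G => i ≤ ∑ b : B, v b g)).card

/-- The trivial (indiscrete) partition `{G}`, which discloses nothing. -/
def trivPart (G : Type*) [Fintype G] [DecidableEq G] [Nonempty G] :
    Finpartition (univ : Finset G) :=
  Finpartition.indiscrete Finset.univ_nonempty.ne_empty

/-- `(π, f)` is a pure subgame perfect equilibrium of the two-stage game. -/
def IsSPE (v : B → G → ℕ) (π : S → Finpartition (univ : Finset G))
    (f : (S → Finpartition (univ : Finset G)) → (B → S)) : Prop :=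
  (∀ τ, IsNash v τ (f τ)) ∧
  ∀ (s : S) (ρ : Finpartition (univ : Finset G)),
    useller v (Function.update π s ρ) (f (Function.update π s ρ)) s ≤ useller v π (f π) s

set_option linter.unusedSectionVars false

-- my lemmas
lemma V1_empty_part (v : B → G → ℕ) (Bb : Finset B) : V1 v Bb ∅ = 0 := by
  simp [V1, vsum]

lemma V2_empty_part (v : B → G → ℕ) (Bb : Finset B) : V2 v Bb ∅ = 0 := by
  unfold V2
  split
  · simp [V1_empty_part]
  · rfl

lemma V1_mono (v : B → G → ℕ) {B1 B2 : Finset B} (h : B1 ⊆ B2) (T : Finset G) :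
    V1 v B1 T ≤ V1 v B2 T := Finset.sup_mono h

lemma V2_le_V1_erase [Nonempty B] (v : B → G → ℕ) (b0 : B) (T : Finset G) :
    V2 v (univ : Finset B) T ≤ V1 v (univ.erase b0) T := by
  unfold V2
  rw [dif_pos univ_nonempty]
  exact Finset.inf'_le _ (mem_univ b0)

lemma V2_le_V1 (v : B → G → ℕ) (Bb : Finset B) (T : Finset G) :
    V2 v Bb T ≤ V1 v Bb T := by
  unfold V2
  split
  · rename_i h
    obtain ⟨b, hb⟩ := h
    exact le_trans (Finset.inf'_le _ hb) (V1_mono v (erase_subset _ _) T)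
  · exact Nat.zero_le _

/-- the count of goods in `T` demanded by some buyer in `Bb` bounds `V1`. -/
lemma V1_le_card_filter (v : B → G → ℕ) (hv : ∀ b g, v b g ≤ 1) (Bb : Finset B) (T : Finset G) :
    V1 v Bb T ≤ (T.filter (fun g => ∃ b ∈ Bb, v b g ≠ 0)).card := by
  apply Finset.sup_le
  intro b hb
  calc vsum v b T = ∑ g ∈ T.filter (fun g => v b g ≠ 0), v b g := (Finset.sum_filter_ne_zero T).symm
    _ ≤ ∑ g ∈ T.filter (fun g => ∃ b ∈ Bb, v b g ≠ 0), v b g := by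
        apply Finset.sum_le_sum_of_subset
        intro g hg
        simp only [Finset.mem_filter] at hg ⊢
        exact ⟨hg.1, b, hb, hg.2⟩
    _ ≤ ∑ _g ∈ T.filter (fun g => ∃ b ∈ Bb, v b g ≠ 0), 1 := Finset.sum_le_sum (fun g _ => hv b g)
    _ = _ := by simp

/-- summing a filtered-card over the parts of a partition of `univ`. -/
lemma sum_parts_filter_card (π : Finpartition (univ : Finset G)) (p : G → Prop) [DecidablePred p] :
    ∑ T ∈ π.parts, (T.filter p).card = (univ.filter p).card := by
  have h1 : (univ : Finset G) = π.parts.biUnion id := by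
    rw [← Finset.sup_eq_biUnion, π.sup_parts]
  have h2 : univ.filter p = π.parts.biUnion (fun T => T.filter p) := by
    conv_lhs => rw [h1]
    rw [filter_biUnion]
    rfl
  rw [h2, card_biUnion]
  intro x hx y hy hxy
  exact Finset.disjoint_filter_filter
    ((π.supIndep.pairwiseDisjoint hx hy hxy).mono (le_refl _) (le_refl _))

/-- sum of V1 over a partition bounded by count of demanded goods -/
lemma sum_V1_le (v : B → G → ℕ) (hv : ∀ b g, v b g ≤ 1) (Bb : Finset B)
    (π : Finpartition (univ : Finset G)) :
    ∑ T ∈ π.parts, V1 v Bb T ≤ (univ.filter (fun g => ∃ b ∈ Bb, v b g ≠ 0)).card := by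
  rw [← sum_parts_filter_card π]
  exact Finset.sum_le_sum (fun T _ => V1_le_card_filter v hv Bb T)

def dem (v : B → G → ℕ) (g : G) : ℕ := ∑ b, v b g

lemma card_demanders (v : B → G → ℕ) (hv : ∀ b g, v b g ≤ 1) (g : G) :
    (univ.filter (fun b => v b g ≠ 0)).card = dem v g := by
  unfold dem
  rw [← Finset.sum_filter_ne_zero (univ : Finset B) (f := fun b => v b g)]
  rw [Finset.card_eq_sum_ones]
  apply Finset.sum_congr rfl
  intro b hb
  simp only [mem_filter] at hb
  have := hv b g
  omega

noncomputable def own [Nonempty B] (v : B → G → ℕ) (g : G) : B :=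
  if h : ∃ b, v b g ≠ 0 then h.choose else Classical.arbitrary B

lemma own_demands [Nonempty B] (v : B → G → ℕ) (g : G) (h : ∃ b, v b g ≠ 0) :
    v (own v g) g ≠ 0 := by
  rw [own, dif_pos h]
  exact h.choose_spec

lemma dem_pos_exists (v : B → G → ℕ) (g : G) (h : 1 ≤ dem v g) : ∃ b, v b g ≠ 0 := by
  by_contra hc
  push_neg at hc
  have : dem v g = 0 := Finset.sum_eq_zero (fun b _ => hc b)
  omega

lemma own_unique [Nonempty B] (v : B → G → ℕ) (hv : ∀ b g, v b g ≤ 1) (g : G)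
    (hd : dem v g = 1) {b : B} (hb : v b g ≠ 0) : b = own v g := by
  have h1 : (univ.filter (fun b => v b g ≠ 0)).card = 1 := by
    rw [card_demanders v hv g]; exact hd
  have hbo : own v g ∈ univ.filter (fun b => v b g ≠ 0) := by
    simp only [mem_filter, mem_univ, true_and]
    exact own_demands v g ⟨b, hb⟩
  have hbm : b ∈ univ.filter (fun b => v b g ≠ 0) := by
    simp only [mem_filter, mem_univ, true_and]; exact hb
  exact Finset.card_le_one.1 (le_of_eq h1) _ hbm _ hbo

lemma two_dem_sum (v : B → G → ℕ) {b1 b2 : B} (hne : b1 ≠ b2) (g : G) :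
    v b1 g + v b2 g ≤ dem v g := by
  unfold dem
  calc v b1 g + v b2 g = ∑ b ∈ ({b1, b2} : Finset B), v b g := by
        rw [Finset.sum_pair hne]
    _ ≤ _ := Finset.sum_le_sum_of_subset (Finset.subset_univ _)

/-- bound (B2): twice the revenue sum is at most p¹ + p². -/
lemma sum_V2_le_two [Nonempty B] (v : B → G → ℕ) (hv : ∀ b g, v b g ≤ 1)
    (hB : 2 ≤ Fintype.card B) (π : Finpartition (univ : Finset G)) :
    2 * (∑ T ∈ π.parts, V2 v (univ : Finset B) T) ≤
      (univ.filter (fun g => 1 ≤ dem v g)).card + (univ.filter (fun g => 2 ≤ dem v g)).card := by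
  have key : ∀ T : Finset G, V1 v (univ : Finset B) T + V2 v (univ : Finset B) T ≤
      (T.filter (fun g => 1 ≤ dem v g)).card + (T.filter (fun g => 2 ≤ dem v g)).card := by
    intro T
    obtain ⟨b1, -, hb1⟩ := Finset.exists_mem_eq_sup (univ : Finset B) univ_nonempty
      (fun b => vsum v b T)
    have hen : (univ.erase b1).Nonempty := by
      rw [← Finset.card_pos, Finset.card_erase_of_mem (mem_univ b1), Finset.card_univ]
      omega
    obtain ⟨b2, hb2m, hb2⟩ := Finset.exists_mem_eq_sup _ hen (fun b => vsum v b T)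
    have hne : b1 ≠ b2 := (Finset.ne_of_mem_erase hb2m).symm
    have h2 : V2 v (univ : Finset B) T ≤ vsum v b2 T := by
      rw [← hb2]; exact V2_le_V1_erase v b1 T
    calc V1 v (univ : Finset B) T + V2 v (univ : Finset B) T
        ≤ vsum v b1 T + vsum v b2 T := by rw [V1, hb1]; omega
      _ = ∑ g ∈ T, (v b1 g + v b2 g) := by rw [vsum, vsum, ← Finset.sum_add_distrib]
      _ ≤ ∑ g ∈ T, ((if 1 ≤ dem v g then 1 else 0) + (if 2 ≤ dem v g then 1 else 0)) := by
          apply Finset.sum_le_sum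
          intro g hg
          have hd := two_dem_sum v hne g
          have := hv b1 g; have := hv b2 g
          split_ifs <;> omega
      _ = (T.filter (fun g => 1 ≤ dem v g)).card + (T.filter (fun g => 2 ≤ dem v g)).card := by
          rw [Finset.sum_add_distrib, Finset.sum_boole, Finset.sum_boole]
          norm_num
  calc 2 * (∑ T ∈ π.parts, V2 v (univ : Finset B) T)
      ≤ ∑ T ∈ π.parts, (V1 v (univ : Finset B) T + V2 v (univ : Finset B) T) := by
        rw [Finset.sum_add_distrib, two_mul]
        have := Finset.sum_le_sum (fun T (_ : T ∈ π.parts) => V2_le_V1 v univ T)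
        omega
    _ ≤ ∑ T ∈ π.parts, ((T.filter (fun g => 1 ≤ dem v g)).card +
          (T.filter (fun g => 2 ≤ dem v g)).card) := Finset.sum_le_sum (fun T _ => key T)
    _ = _ := by rw [Finset.sum_add_distrib, sum_parts_filter_card, sum_parts_filter_card]

/-- bound (B1): revenue sum avoids goods demanded only by `b0`. -/
lemma sum_V2_le_erase [Nonempty B] (v : B → G → ℕ) (hv : ∀ b g, v b g ≤ 1) (b0 : B)
    (π : Finpartition (univ : Finset G)) :
    ∑ T ∈ π.parts, V2 v (univ : Finset B) T ≤
      (univ.filter (fun g => ∃ b ∈ univ.erase b0, v b g ≠ 0)).card := by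
  rw [← sum_parts_filter_card π]
  apply Finset.sum_le_sum
  intro T _
  refine le_trans (le_trans (V2_le_V1_erase v b0 T) (V1_le_card_filter v hv _ T)) (le_of_eq ?_)
  congr 1
  ext g
  simp

lemma erase_filter_card_le [Nonempty B] (v : B → G → ℕ) (hv : ∀ b g, v b g ≤ 1) (b0 : B) :
    (univ.filter (fun g => ∃ b ∈ univ.erase b0, v b g ≠ 0)).card +
      ((univ.filter (fun g => dem v g = 1)).filter (fun g => own v g = b0)).card ≤
      (univ.filter (fun g => 1 ≤ dem v g)).card := by
  rw [← Finset.card_union_of_disjoint]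
  · apply Finset.card_le_card
    intro g hg
    simp only [mem_union, mem_filter, mem_univ, true_and, mem_erase] at hg ⊢
    rcases hg with ⟨b, ⟨_, _⟩, hb⟩ | ⟨h1, _⟩
    · have h2 : v b g ≤ dem v g := by
        unfold dem
        exact Finset.single_le_sum (f := fun b => v b g) (fun _ _ => Nat.zero_le _) (mem_univ b)
      omega
    · omega
  · rw [Finset.disjoint_left]
    intro g hgA hgC
    simp only [mem_filter, mem_univ, true_and, mem_erase] at hgA hgC
    obtain ⟨b, ⟨hbne, -⟩, hb⟩ := hgA
    exact hbne ((own_unique v hv g hgC.1 hb).trans hgC.2)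

/-- Greedy pairing of goods with distinct owners. -/
lemma pairing [Nonempty B] (hB : 2 ≤ Fintype.card B) (ow : G → B) (D : Finset G) :
    ∃ (P : Finset (Finset G)) (U : Finset G) (b0 : B),
      (∀ p ∈ P, ∃ g1 g2, g1 ∈ D ∧ g2 ∈ D ∧ g1 ≠ g2 ∧ ow g1 ≠ ow g2 ∧ p = {g1, g2}) ∧
      (U ∪ P.sup id = D) ∧
      (Disjoint U (P.sup id)) ∧
      ((P : Set (Finset G)).PairwiseDisjoint id) ∧
      (∀ g ∈ U, ow g = b0) ∧
      (D.card = 2 * P.card + U.card) ∧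
      (U.card ≤ 1 ∨ D.card + U.card ≤ 2 * (D.filter (fun g => ow g = b0)).card) := by
  induction D using Finset.strongInduction with
  | _ D ih =>
  by_cases hsame : ∀ g ∈ D, ∀ g' ∈ D, ow g = ow g'
  · -- no pair available: everything unmatched
    rcases D.eq_empty_or_nonempty with hD | hD
    · refine ⟨∅, ∅, Classical.arbitrary B, ?_, ?_, ?_, ?_, ?_, ?_, ?_⟩ <;> simp [hD]
    · obtain ⟨g0, hg0⟩ := hD
      refine ⟨∅, D, ow g0, by simp, by simp, by simp, by simp,
        fun g hg => hsame g hg g0 hg0, by simp, Or.inr ?_⟩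
      rw [Finset.filter_true_of_mem (fun g hg => hsame g hg g0 hg0)]
      omega
  · push_neg at hsame
    obtain ⟨g, hgD, g', hg'D, hownne⟩ := hsame
    set cnt : B → ℕ := fun b => (D.filter (fun x => ow x = b)).card with hcnt
    obtain ⟨b1, -, hb1max⟩ := Finset.exists_max_image (univ : Finset B) cnt univ_nonempty
    have hcnt_pos : ∀ x ∈ D, 1 ≤ cnt (ow x) := by
      intro x hx
      have hm : x ∈ D.filter (fun y => ow y = ow x) := by simp [hx]
      exact Finset.card_pos.2 ⟨x, hm⟩
    have hb1pos : 1 ≤ cnt b1 := le_trans (hcnt_pos g hgD) (hb1max _ (mem_univ _))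
    obtain ⟨g1, hg1⟩ := Finset.card_pos.1 hb1pos
    simp only [mem_filter] at hg1
    obtain ⟨hg1D, hg1own⟩ := hg1
    -- a good not owned by b1
    have hgw : ∃ gw ∈ D, ow gw ≠ b1 := by
      by_cases h : ow g = b1
      · exact ⟨g', hg'D, fun hc => hownne (h.trans hc.symm)⟩
      · exact ⟨g, hgD, h⟩
    obtain ⟨gw, hgwD, hgwne⟩ := hgw
    have herase_ne : (univ.erase b1).Nonempty := by
      rw [← Finset.card_pos, Finset.card_erase_of_mem (mem_univ b1), Finset.card_univ]
      omega
    obtain ⟨b2, hb2mem, hb2max⟩ := Finset.exists_max_image (univ.erase b1) cnt herase_ne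
    have hb2ne : b2 ≠ b1 := Finset.ne_of_mem_erase hb2mem
    have hb2pos : 1 ≤ cnt b2 := le_trans (hcnt_pos gw hgwD)
      (hb2max _ (Finset.mem_erase.2 ⟨hgwne, mem_univ _⟩))
    obtain ⟨g2, hg2⟩ := Finset.card_pos.1 hb2pos
    simp only [mem_filter] at hg2
    obtain ⟨hg2D, hg2own⟩ := hg2
    have hg12 : g1 ≠ g2 := fun hc => hb2ne (by rw [← hg2own, ← hc, hg1own])
    have hown12 : ow g1 ≠ ow g2 := by rw [hg1own, hg2own]; exact fun hc => hb2ne hc.symm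
    set D' := (D.erase g1).erase g2 with hD'
    have hg1nD' : g1 ∉ D' := fun hc => (Finset.mem_erase.1 (Finset.mem_of_mem_erase hc)).1 rfl
    have hg2nD' : g2 ∉ D' := fun hc => (Finset.mem_erase.1 hc).1 rfl
    have hD'sub : D' ⊆ D := (Finset.erase_subset _ _).trans (Finset.erase_subset _ _)
    have hD'ssub : D' ⊂ D := (Finset.ssubset_iff_of_subset hD'sub).2 ⟨g1, hg1D, hg1nD'⟩
    have hDcard2 : 2 ≤ D.card := Finset.one_lt_card.2 ⟨g1, hg1D, g2, hg2D, hg12⟩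
    have hD'card : D'.card + 2 = D.card := by
      rw [hD', Finset.card_erase_of_mem (Finset.mem_erase.2 ⟨fun hc => hg12 hc.symm, hg2D⟩),
        Finset.card_erase_of_mem hg1D]
      omega
    have hmemD' : ∀ x, x ∈ D' ↔ x ∈ D ∧ x ≠ g1 ∧ x ≠ g2 := by
      intro x
      simp only [hD', Finset.mem_erase]
      tauto
    obtain ⟨P', U', b0, hp, hcov, hdisjU, hpwd, hUown, hcard, hbound⟩ := ih D' hD'ssub
    have hPsub : ∀ p ∈ P', p ⊆ D' := by
      intro p hpmem
      obtain ⟨a, b, ha, hb, -, -, rfl⟩ := hp p hpmem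
      intro x hx
      rcases Finset.mem_insert.1 hx with rfl | hx
      · exact ha
      · rw [Finset.mem_singleton.1 hx]; exact hb
    have hU'sub : U' ⊆ D' := hcov ▸ Finset.subset_union_left
    have hpairnew : ({g1, g2} : Finset G) ∉ P' := fun hc =>
      hg1nD' (hPsub _ hc (Finset.mem_insert_self _ _))
    have hsupeq : (insert ({g1, g2} : Finset G) P').sup id = {g1, g2} ∪ P'.sup id := by
      rw [Finset.sup_insert]; rfl
    refine ⟨insert {g1, g2} P', U', b0, ?_, ?_, ?_, ?_, hUown, ?_, ?_⟩
    · intro p hpmem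
      rcases Finset.mem_insert.1 hpmem with rfl | hpmem
      · exact ⟨g1, g2, hg1D, hg2D, hg12, hown12, rfl⟩
      · obtain ⟨a, b, ha, hb, hab, hoab, rfl⟩ := hp p hpmem
        exact ⟨a, b, hD'sub ha, hD'sub hb, hab, hoab, rfl⟩
    · -- coverage
      rw [hsupeq]
      ext x
      by_cases h1 : x = g1
      · subst h1
        simp only [Finset.mem_union, Finset.mem_insert, Finset.mem_singleton, true_or, or_true]
        simp [hg1D]
      · by_cases h2 : x = g2
        · subst h2
          simp only [Finset.mem_union, Finset.mem_insert, Finset.mem_singleton, true_or, or_true]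
          simp [hg2D]
        · have hcov' : x ∈ U' ∪ P'.sup id ↔ x ∈ D' := by rw [hcov]
          have hx' := hmemD' x
          simp only [Finset.mem_union] at hcov'
          simp only [Finset.mem_union, Finset.mem_insert, Finset.mem_singleton, h1, h2,
            false_or, or_false]
          tauto
    · -- disjoint U (sup)
      rw [hsupeq, Finset.disjoint_union_right]
      constructor
      · rw [Finset.disjoint_right]
        intro x hx hxU
        have := hU'sub hxU
        rcases Finset.mem_insert.1 hx with rfl | hx
        · exact hg1nD' this
        · rw [Finset.mem_singleton.1 hx] at this; exact hg2nD' this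
      · exact hdisjU
    · -- pairwise disjoint
      rw [Finset.coe_insert]
      apply hpwd.insert
      intro p hpmem hne
      simp only [id_eq]
      rw [Finset.disjoint_left]
      intro x hx hxp
      have hxD' := hPsub p hpmem hxp
      rcases Finset.mem_insert.1 hx with rfl | hx
      · exact hg1nD' hxD'
      · rw [Finset.mem_singleton.1 hx] at hxD'; exact hg2nD' hxD'
    · -- cardinality
      rw [Finset.card_insert_of_notMem hpairnew]
      omega
    · -- the bound
      rcases hbound with h | h
      · exact Or.inl h
      · by_cases hb0case : b0 = b1 ∨ b0 = b2
        · right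
          have hsubf : D'.filter (fun g => ow g = b0) ⊆ (D.filter (fun g => ow g = b0)).erase
              (if b0 = b1 then g1 else g2) := by
            intro x hx
            simp only [Finset.mem_filter, Finset.mem_erase] at hx ⊢
            obtain ⟨hxD', hxo⟩ := hx
            rw [hmemD'] at hxD'
            split_ifs <;> exact ⟨by tauto, hxD'.1, hxo⟩
          have hmemf : (if b0 = b1 then g1 else g2) ∈ D.filter (fun g => ow g = b0) := by
            split_ifs with hh
            · simp only [Finset.mem_filter]; exact ⟨hg1D, by rw [hg1own, hh]⟩
            · simp only [Finset.mem_filter]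
              refine ⟨hg2D, ?_⟩
              rw [hg2own]
              rcases hb0case with h' | h'
              · exact absurd h' hh
              · exact h'.symm
          have := Finset.card_le_card hsubf
          rw [Finset.card_erase_of_mem hmemf] at this
          have hpos := Finset.card_pos.2 ⟨_, hmemf⟩
          omega
        · left
          push_neg at hb0case
          obtain ⟨hb01, hb02⟩ := hb0case
          have hc0le : cnt b0 ≤ cnt b2 := hb2max _ (Finset.mem_erase.2 ⟨hb01, mem_univ _⟩)
          have hc2le : cnt b2 ≤ cnt b1 := hb1max _ (mem_univ _)
          have hcnt'le : (D'.filter (fun g => ow g = b0)).card ≤ cnt b0 :=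
            Finset.card_le_card (Finset.filter_subset_filter _ hD'sub)
          have hUle : U'.card ≤ cnt b0 := by
            apply Finset.card_le_card
            intro x hx
            simp only [Finset.mem_filter]
            exact ⟨hD'sub (hU'sub hx), hUown x hx⟩
          have h3 : cnt b0 + cnt b1 + cnt b2 ≤ D.card := by
            have hd01 : Disjoint (D.filter (fun g => ow g = b0)) (D.filter (fun g => ow g = b1)) := by
              rw [Finset.disjoint_left]
              intro x hx hx'
              simp only [Finset.mem_filter] at hx hx'
              exact hb01 (hx.2.symm.trans hx'.2)
            have hd02 : Disjoint (D.filter (fun g => ow g = b0) ∪ D.filter (fun g => ow g = b1))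
                (D.filter (fun g => ow g = b2)) := by
              rw [Finset.disjoint_left]
              intro x hx hx'
              simp only [Finset.mem_union, Finset.mem_filter] at hx hx'
              rcases hx with hx | hx
              · exact hb02 (hx.2.symm.trans hx'.2)
              · exact hb2ne (hx'.2.symm.trans hx.2)
            calc cnt b0 + cnt b1 + cnt b2
                = ((D.filter (fun g => ow g = b0) ∪ D.filter (fun g => ow g = b1)) ∪
                    D.filter (fun g => ow g = b2)).card := by
                  rw [Finset.card_union_of_disjoint hd02, Finset.card_union_of_disjoint hd01]
              _ ≤ D.card := Finset.card_le_card (by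
                  intro x hx
                  simp only [Finset.mem_union, Finset.mem_filter] at hx
                  tauto)
          omega

lemma exists_opt_partition [Nonempty B] (v : B → G → ℕ) (hv : ∀ b g, v b g ≤ 1)
    (hB : 2 ≤ Fintype.card B) :
    ∃ (π : Finpartition (univ : Finset G)) (q u : ℕ),
      (∀ π' : Finpartition (univ : Finset G),
        ∑ T ∈ π'.parts, V2 v (univ : Finset B) T ≤ ∑ T ∈ π.parts, V2 v (univ : Finset B) T) ∧
      (∑ T ∈ π.parts, V1 v (univ : Finset B) T =
        (univ.filter (fun g => 2 ≤ dem v g)).card + q + u) ∧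
      ((univ.filter (fun g => dem v g = 1)).card = 2 * q + u) := by
  classical
  set D1 : Finset G := univ.filter (fun g => dem v g = 1) with hD1def
  set D2 : Finset G := univ.filter (fun g => 2 ≤ dem v g) with hD2def
  obtain ⟨P, U, b0, hp, hcov, hdisjU, hpwd, hUown, hcard, hbound⟩ := pairing hB (own v) D1
  set Rest : Finset G := univ \ (D2 ∪ P.sup id) with hRestdef
  -- membership characterizations
  have hPsupD1 : P.sup id ⊆ D1 := by
    rw [← hcov]; exact Finset.subset_union_right
  have hUD1 : U ⊆ D1 := by
    rw [← hcov]; exact Finset.subset_union_left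
  have hD1dem : ∀ g ∈ D1, dem v g = 1 := by
    intro g hg; exact (Finset.mem_filter.1 hg).2
  have hD2dem : ∀ g ∈ D2, 2 ≤ dem v g := by
    intro g hg; exact (Finset.mem_filter.1 hg).2
  have hD1D2 : Disjoint D1 D2 := by
    rw [Finset.disjoint_left]
    intro g hg hg2
    have := hD1dem g hg; have := hD2dem g hg2; omega
  have hRest : ∀ g, g ∈ Rest ↔ (dem v g = 0 ∨ g ∈ U) := by
    intro g
    rw [hRestdef, Finset.mem_sdiff, Finset.mem_union]
    constructor
    · rintro ⟨-, hg⟩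
      push_neg at hg
      by_cases h0 : dem v g = 0
      · exact Or.inl h0
      · right
        by_cases h1 : dem v g = 1
        · have hgD1 : g ∈ D1 := by rw [hD1def]; simp [h1]
          have := hcov
          have hgmem : g ∈ U ∪ P.sup id := by rw [hcov]; exact hgD1
          rcases Finset.mem_union.1 hgmem with h | h
          · exact h
          · exact absurd h hg.2
        · exact absurd (by rw [hD2def]; simp; omega) hg.1
    · rintro (h0 | hU)
      · refine ⟨mem_univ g, ?_⟩
        rw [not_or]
        constructor
        · intro hc; have := hD2dem g hc; omega
        · intro hc
          have := hD1dem g (hPsupD1 hc); omega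
      · refine ⟨mem_univ g, ?_⟩
        rw [not_or]
        constructor
        · intro hc
          have := hD2dem g hc
          have := hD1dem g (hUD1 hU)
          omega
        · intro hc
          exact (Finset.disjoint_left.1 hdisjU) hU hc
  -- valuation facts
  have hv_le_dem : ∀ b g, v b g ≤ dem v g := by
    intro b g
    exact Finset.single_le_sum (f := fun b => v b g) (fun _ _ => Nat.zero_le _) (mem_univ b)
  have hU_val : ∀ g ∈ U, ∀ b : B, v b g = if b = b0 then 1 else 0 := by
    intro g hg b
    have hd1 : dem v g = 1 := hD1dem g (hUD1 hg)
    have hod := own_demands v g (dem_pos_exists v g (by omega))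
    have hob : own v g = b0 := hUown g hg
    split_ifs with hb
    · subst hb; rw [← hob]
      have := hv (own v g) g
      omega
    · by_contra hc
      exact hb ((own_unique v hv g hd1 hc).trans hob)
  -- V1 and V2 of the three kinds of parts
  have hsingle : ∀ g ∈ D2, V1 v (univ : Finset B) {g} = 1 ∧ V2 v (univ : Finset B) {g} = 1 := by
    intro g hg
    have hd : 2 ≤ dem v g := hD2dem g hg
    have hvs : ∀ b, vsum v b {g} = v b g := by intro b; rw [vsum, Finset.sum_singleton]
    have hV1e : ∀ b0' : B, 1 ≤ V1 v (univ.erase b0') {g} := by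
      intro b0'
      have hex : ∃ b', b' ≠ b0' ∧ v b' g ≠ 0 := by
        by_contra hc
        push_neg at hc
        have : dem v g ≤ v b0' g := by
          rw [dem, ← Finset.add_sum_erase _ _ (mem_univ b0')]
          have : ∑ b ∈ univ.erase b0', v b g = 0 :=
            Finset.sum_eq_zero (fun b hb => hc b (Finset.ne_of_mem_erase hb))
          omega
        have := hv b0' g
        omega
      obtain ⟨b', hb'ne, hb'⟩ := hex
      calc 1 ≤ vsum v b' {g} := by rw [hvs]; omega
        _ ≤ _ := Finset.le_sup (f := fun b => vsum v b {g}) (Finset.mem_erase.2 ⟨hb'ne, mem_univ _⟩)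
    have hV1 : V1 v (univ : Finset B) {g} = 1 := by
      apply Nat.le_antisymm
      · apply Finset.sup_le; intro b _; rw [hvs]; exact hv b g
      · obtain ⟨b', hb'⟩ := dem_pos_exists v g (by omega)
        calc 1 ≤ vsum v b' {g} := by rw [hvs]; omega
          _ ≤ _ := Finset.le_sup (f := fun b => vsum v b {g}) (mem_univ b')
    refine ⟨hV1, Nat.le_antisymm (le_trans (V2_le_V1 v _ _) (le_of_eq hV1)) ?_⟩
    rw [V2, dif_pos univ_nonempty]
    apply Finset.le_inf'
    intro b _
    exact hV1e b
  have hpair : ∀ p ∈ P, V1 v (univ : Finset B) p = 1 ∧ V2 v (univ : Finset B) p = 1 := by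
    intro p hpmem
    obtain ⟨g1, g2, hg1, hg2, hne, hone, rfl⟩ := hp p hpmem
    have hd1 : dem v g1 = 1 := hD1dem g1 hg1
    have hd2 : dem v g2 = 1 := hD1dem g2 hg2
    have ho1 := own_demands v g1 (dem_pos_exists v g1 (by omega))
    have ho2 := own_demands v g2 (dem_pos_exists v g2 (by omega))
    have hvs : ∀ b, vsum v b {g1, g2} = v b g1 + v b g2 := by
      intro b; rw [vsum, Finset.sum_pair hne]
    have hvsle : ∀ b, vsum v b {g1, g2} ≤ 1 := by
      intro b
      rw [hvs]
      by_cases h1 : v b g1 = 0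
      · have := hv b g2; omega
      · by_cases h2 : v b g2 = 0
        · have := hv b g1; omega
        · exact absurd ((own_unique v hv g1 hd1 h1).symm.trans (own_unique v hv g2 hd2 h2)) hone
    have hV1 : V1 v (univ : Finset B) {g1, g2} = 1 := by
      apply Nat.le_antisymm
      · exact Finset.sup_le (fun b _ => hvsle b)
      · calc 1 ≤ vsum v (own v g1) {g1, g2} := by rw [hvs]; omega
          _ ≤ _ := Finset.le_sup (f := fun b => vsum v b {g1, g2}) (mem_univ _)
    refine ⟨hV1, Nat.le_antisymm (le_trans (V2_le_V1 v _ _) (le_of_eq hV1)) ?_⟩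
    rw [V2, dif_pos univ_nonempty]
    apply Finset.le_inf'
    intro b _
    have : ∃ g', (g' = g1 ∨ g' = g2) ∧ own v g' ≠ b := by
      by_cases h : own v g1 = b
      · exact ⟨g2, Or.inr rfl, fun hc => hone (h.symm ▸ hc ▸ rfl)⟩
      · exact ⟨g1, Or.inl rfl, h⟩
    obtain ⟨g', hg', hgo⟩ := this
    have hvg' : v (own v g') g' ≠ 0 := by
      rcases hg' with rfl | rfl
      · exact ho1
      · exact ho2
    calc 1 ≤ vsum v (own v g') {g1, g2} := by
          rw [hvs]
          rcases hg' with rfl | rfl <;> omega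
      _ ≤ _ := Finset.le_sup (f := fun b => vsum v b {g1, g2}) (Finset.mem_erase.2 ⟨hgo, mem_univ _⟩)
  have hrest_vsum : ∀ b : B, vsum v b Rest = if b = b0 then U.card else 0 := by
    intro b
    have hUsub : U ⊆ Rest := fun g hg => (hRest g).2 (Or.inr hg)
    have hzero : ∀ g ∈ Rest, g ∉ U → v b g = 0 := by
      intro g hg hgu
      rcases (hRest g).1 hg with h0 | h'
      · have := hv_le_dem b g; omega
      · exact absurd h' hgu
    rw [vsum, ← Finset.sum_subset hUsub (fun g hg hgu => hzero g hg hgu)]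
    split_ifs with hb
    · rw [Finset.card_eq_sum_ones]
      apply Finset.sum_congr rfl
      intro g hg
      rw [hU_val g hg b, if_pos hb]
    · exact Finset.sum_eq_zero (fun g hg => by rw [hU_val g hg b, if_neg hb])
  have hrestV1 : V1 v (univ : Finset B) Rest = U.card := by
    apply Nat.le_antisymm
    · apply Finset.sup_le
      intro b _
      rw [hrest_vsum b]
      split_ifs <;> omega
    · calc U.card = vsum v b0 Rest := by rw [hrest_vsum b0, if_pos rfl]
        _ ≤ _ := Finset.le_sup (f := fun b => vsum v b Rest) (mem_univ b0)
  have hrestV2 : V2 v (univ : Finset B) Rest = 0 := by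
    have := V2_le_V1_erase v b0 Rest
    have h0 : V1 v (univ.erase b0) Rest = 0 := by
      apply Nat.le_antisymm _ (Nat.zero_le _)
      apply Finset.sup_le
      intro b hb
      rw [hrest_vsum b, if_neg (Finset.ne_of_mem_erase hb)]
    omega
  -- assemble the partition
  set A : Finset (Finset G) := D2.image (fun g => ({g} : Finset G)) with hAdef
  set parts₀ : Finset (Finset G) := A ∪ P ∪ {Rest} with hparts
  have hmemA : ∀ x, x ∈ A ↔ ∃ g ∈ D2, x = {g} := by
    intro x
    rw [hAdef, Finset.mem_image]
    constructor
    · rintro ⟨g, hg, rfl⟩; exact ⟨g, hg, rfl⟩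
    · rintro ⟨g, hg, rfl⟩; exact ⟨g, hg, rfl⟩
  have hsubDP : ∀ x, x ∈ A ∪ P → x ⊆ D2 ∪ P.sup id := by
    intro x hx
    rcases Finset.mem_union.1 hx with hx | hx
    · obtain ⟨g, hg, rfl⟩ := (hmemA x).1 hx
      intro y hy
      rw [Finset.mem_singleton.1 hy]
      exact Finset.mem_union_left _ hg
    · intro y hy
      exact Finset.mem_union_right _ (Finset.mem_sup.2 ⟨x, hx, hy⟩)
  have hRdisj : ∀ x, x ∈ A ∪ P → Disjoint x Rest := by
    intro x hx
    rw [Finset.disjoint_right]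
    intro g hgR hgx
    have := hsubDP x hx hgx
    rw [hRestdef, Finset.mem_sdiff] at hgR
    exact hgR.2 this
  have hRnotAP : Rest ∉ A ∪ P := by
    intro hc
    have hdisj := hRdisj Rest hc
    have hRne : Rest.Nonempty := by
      rcases Finset.mem_union.1 hc with hx | hx
      · obtain ⟨g, hg, heq⟩ := (hmemA Rest).1 hx
        exact ⟨g, heq ▸ Finset.mem_singleton_self g⟩
      · obtain ⟨g1, g2, -, -, hne, -, heq⟩ := hp Rest hx
        exact ⟨g1, heq ▸ Finset.mem_insert_self _ _⟩
    obtain ⟨g, hg⟩ := hRne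
    exact Finset.disjoint_left.1 hdisj hg hg
  have hAP : Disjoint A P := by
    rw [Finset.disjoint_left]
    intro x hxA hxP
    obtain ⟨g, hg, rfl⟩ := (hmemA _).1 hxA
    obtain ⟨g1, g2, -, -, hne, -, heq⟩ := hp _ hxP
    have h1 : ({g} : Finset G).card = 1 := Finset.card_singleton g
    have h2 : ({g} : Finset G).card = 2 := by rw [heq]; exact Finset.card_pair hne
    omega
  have hsup : parts₀.sup id = univ := by
    apply Finset.Subset.antisymm
    · intro g hg
      exact mem_univ g
    · intro g _
      rw [Finset.mem_sup]
      by_cases hg2 : g ∈ D2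
      · exact ⟨{g}, Finset.mem_union_left _ (Finset.mem_union_left _
          ((hmemA _).2 ⟨g, hg2, rfl⟩)), Finset.mem_singleton_self g⟩
      · by_cases hgP : g ∈ P.sup id
        · obtain ⟨p, hpm, hgp⟩ := Finset.mem_sup.1 hgP
          exact ⟨p, Finset.mem_union_left _ (Finset.mem_union_right _ hpm), hgp⟩
        · refine ⟨Rest, Finset.mem_union_right _ (Finset.mem_singleton_self _), ?_⟩
          show g ∈ Rest
          rw [hRestdef, Finset.mem_sdiff, Finset.mem_union]
          exact ⟨mem_univ g, fun hc => hc.elim hg2 hgP⟩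
  have hindep : parts₀.SupIndep id := by
    rw [Finset.supIndep_iff_pairwiseDisjoint]
    intro x hx y hy hne
    simp only [Finset.mem_coe, hparts, Finset.mem_union, Finset.mem_singleton] at hx hy
    simp only [id_eq, Function.onFun]
    rcases hx with (hx | hx) | hx <;> rcases hy with (hy | hy) | hy
    · obtain ⟨g, hg, rfl⟩ := (hmemA _).1 hx
      obtain ⟨g', hg', rfl⟩ := (hmemA _).1 hy
      rw [Finset.disjoint_singleton]
      exact fun hc => hne (by rw [hc])
    · obtain ⟨g, hg, rfl⟩ := (hmemA _).1 hx
      obtain ⟨g1, g2, h1, h2, -, -, rfl⟩ := hp _ hy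
      rw [Finset.disjoint_left]
      intro z hz hz'
      rw [Finset.mem_singleton.1 hz] at hz'
      have hgd := hD2dem g hg
      rcases Finset.mem_insert.1 hz' with h | h
      · have := hD1dem g1 h1; rw [← h] at this; omega
      · have := hD1dem g2 h2; rw [← Finset.mem_singleton.1 h] at this; omega
    · subst hy; exact hRdisj x (Finset.mem_union_left _ hx)
    · obtain ⟨g, hg, rfl⟩ := (hmemA _).1 hy
      obtain ⟨g1, g2, h1, h2, -, -, rfl⟩ := hp _ hx
      rw [Finset.disjoint_right]
      intro z hz hz'
      rw [Finset.mem_singleton.1 hz] at hz'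
      have hgd := hD2dem g hg
      rcases Finset.mem_insert.1 hz' with h | h
      · have := hD1dem g1 h1; rw [← h] at this; omega
      · have := hD1dem g2 h2; rw [← Finset.mem_singleton.1 h] at this; omega
    · exact hpwd hx hy hne
    · subst hy; exact hRdisj x (Finset.mem_union_right _ hx)
    · subst hx; exact (hRdisj y (Finset.mem_union_left _ hy)).symm
    · subst hx; exact (hRdisj y (Finset.mem_union_right _ hy)).symm
    · subst hx; exact absurd hy.symm hne
  set π : Finpartition (univ : Finset G) := Finpartition.ofErase parts₀ hindep hsup with hπ
  have hπparts : π.parts = parts₀.erase ∅ := rfl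
  -- sums over the parts
  have hsum : ∀ f : Finset G → ℕ, f ∅ = 0 →
      ∑ T ∈ π.parts, f T = (∑ g ∈ D2, f {g}) + (∑ p ∈ P, f p) + f Rest := by
    intro f hf0
    rw [hπparts, Finset.sum_erase _ hf0, hparts,
      Finset.sum_union (Finset.disjoint_singleton_right.2 hRnotAP),
      Finset.sum_union hAP, Finset.sum_singleton,
      Finset.sum_image (fun g₁ _ g₂ _ h => Finset.singleton_injective h)]
  have hV1sum : ∑ T ∈ π.parts, V1 v (univ : Finset B) T = D2.card + P.card + U.card := by
    rw [hsum _ (V1_empty_part v univ)]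
    rw [Finset.sum_congr rfl (fun g hg => (hsingle g hg).1),
      Finset.sum_congr rfl (fun p hpm => (hpair p hpm).1), hrestV1]
    rw [Finset.sum_const, Finset.sum_const, smul_eq_mul, smul_eq_mul, mul_one, mul_one]
  have hV2sum : ∑ T ∈ π.parts, V2 v (univ : Finset B) T = D2.card + P.card := by
    rw [hsum _ (V2_empty_part v univ)]
    rw [Finset.sum_congr rfl (fun g hg => (hsingle g hg).2),
      Finset.sum_congr rfl (fun p hpm => (hpair p hpm).2), hrestV2]
    rw [Finset.sum_const, Finset.sum_const, smul_eq_mul, smul_eq_mul, mul_one, mul_one]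
    omega
  -- revenue optimality
  have hp1 : (univ.filter (fun g => 1 ≤ dem v g)).card = D2.card + D1.card := by
    have hun : (univ.filter (fun g => 1 ≤ dem v g)) = D2 ∪ D1 := by
      ext g
      simp only [Finset.mem_filter, Finset.mem_union, hD1def, hD2def, mem_univ, true_and]
      omega
    rw [hun, Finset.card_union_of_disjoint hD1D2.symm]
  refine ⟨π, P.card, U.card, ?_, by omega, by omega⟩
  intro π'
  rw [hV2sum]
  rcases hbound with hb | hb
  · have h2 := sum_V2_le_two v hv hB π'
    rw [hp1, ← hD2def] at h2
    omega
  · have h1 := sum_V2_le_erase v hv b0 π'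
    have h2 := erase_filter_card_le v hv b0
    rw [hp1] at h2
    rw [← hD1def] at h2
    omega

/-- against a welfare-best revenue-maximizing monopolist,
competition cannot increase welfare. -/
theorem competition_no_gain [Nonempty B] [Nonempty G] [Nonempty S]
    (v : B → G → ℕ) (hv : ∀ b g, v b g ≤ 1)
    (hB : 2 ≤ Fintype.card B) (hS : 2 ≤ Fintype.card S)
    (πhat : Finpartition (univ : Finset G))
    (hmax : ∀ π' : Finpartition (univ : Finset G), rev1 v π' ≤ rev1 v πhat)
    (hbest : ∀ π' : Finpartition (univ : Finset G),
        (∀ π'' : Finpartition (univ : Finset G), rev1 v π'' ≤ rev1 v π') →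
        SW1 v π' ≤ SW1 v πhat)
    (τ : S → Finpartition (univ : Finset G)) (σ : B → S) :
    (Fintype.card S : ℚ) * SWm v τ σ ≤
        (min (Fintype.card S) (Fintype.card B) : ℚ) * SW1 v πhat ∧
      SWm v τ σ ≤ SW1 v πhat := by
    classical
  set m : ℕ := min (Fintype.card S) (Fintype.card B) with hmdef
  have hm2 : 2 ≤ m := le_min hS hB
  set p2 : ℕ := (univ.filter (fun g => 2 ≤ dem v g)).card with hp2def
  set n1 : ℕ := (univ.filter (fun g => dem v g = 1)).card with hn1def
  set N : ℕ := ∑ s : S, ∑ T ∈ (τ s).parts, V1 v (buyersOf σ s) T with hNdef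
  -- step (i): bound the welfare of each seller by the goods its buyers demand
  have hstep1 : N ≤ ∑ s : S, (univ.filter (fun g => ∃ b ∈ buyersOf σ s, v b g ≠ 0)).card := by
    rw [hNdef]
    exact Finset.sum_le_sum (fun s _ => sum_V1_le v hv (buyersOf σ s) (τ s))
  -- step (ii): count goods by multiplicity of demand
  have hstep2 : ∑ s : S, (univ.filter (fun g => ∃ b ∈ buyersOf σ s, v b g ≠ 0)).card ≤
      m * p2 + n1 := by
    have hswap : ∑ s : S, (univ.filter (fun g => ∃ b ∈ buyersOf σ s, v b g ≠ 0)).card =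
        ∑ g : G, (univ.filter (fun s => ∃ b ∈ buyersOf σ s, v b g ≠ 0)).card := by
      simp_rw [Finset.card_filter]
      rw [Finset.sum_comm]
    rw [hswap]
    have hper : ∀ g : G, (univ.filter (fun s => ∃ b ∈ buyersOf σ s, v b g ≠ 0)).card ≤
        (if 2 ≤ dem v g then m else 0) + (if dem v g = 1 then 1 else 0) := by
      intro g
      set t := (univ.filter (fun s => ∃ b ∈ buyersOf σ s, v b g ≠ 0)).card with htdef
      have ht_le_dem : t ≤ dem v g := by
        rw [← card_demanders v hv g, htdef]
        apply Finset.card_le_card_of_injOn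
          (fun s => if h : ∃ b, σ b = s ∧ v b g ≠ 0 then h.choose else Classical.arbitrary B)
        · intro s hs
          simp only [Finset.mem_coe, Finset.mem_filter, mem_univ, true_and, buyersOf] at hs
          obtain ⟨b, hb1, hb2⟩ := hs
          have hb1' : σ b = s := by simpa using hb1
          have hex : ∃ b, σ b = s ∧ v b g ≠ 0 := ⟨b, hb1', hb2⟩
          dsimp only
          rw [dif_pos hex]
          simp only [Finset.mem_coe, Finset.mem_filter, mem_univ, true_and]
          exact hex.choose_spec.2
        · intro s1 hs1 s2 hs2 heq
          dsimp only at heq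
          have hex : ∀ s : S, s ∈ (univ.filter (fun s => ∃ b ∈ buyersOf σ s, v b g ≠ 0) : Finset S) →
              ∃ b, σ b = s ∧ v b g ≠ 0 := by
            intro s hs
            simp only [Finset.mem_filter, mem_univ, true_and, buyersOf] at hs
            obtain ⟨b, hb, hvb⟩ := hs
            have hb' : σ b = s := by simpa using hb
            exact ⟨b, hb', hvb⟩
          have hex1 := hex s1 (Finset.mem_coe.1 hs1)
          have hex2 := hex s2 (Finset.mem_coe.1 hs2)
          rw [dif_pos hex1, dif_pos hex2] at heq
          rw [← hex1.choose_spec.1, ← hex2.choose_spec.1, heq]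
      have ht_le_S : t ≤ Fintype.card S := by
        rw [htdef, ← Finset.card_univ]
        exact Finset.card_le_card (Finset.filter_subset _ _)
      have hdem_le_B : dem v g ≤ Fintype.card B := by
        rw [← card_demanders v hv g, ← Finset.card_univ]
        exact Finset.card_le_card (Finset.filter_subset _ _)
      have htm : t ≤ m := le_min ht_le_S (le_trans ht_le_dem hdem_le_B)
      split_ifs <;> omega
    calc ∑ g : G, (univ.filter (fun s => ∃ b ∈ buyersOf σ s, v b g ≠ 0)).card
        ≤ ∑ g : G, ((if 2 ≤ dem v g then m else 0) + (if dem v g = 1 then 1 else 0)) :=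
          Finset.sum_le_sum (fun g _ => hper g)
      _ = m * p2 + n1 := by
          rw [Finset.sum_add_distrib, ← Finset.sum_filter, ← Finset.sum_filter,
            Finset.sum_const, Finset.sum_const, smul_eq_mul, smul_eq_mul, mul_one, mul_comm]
  -- the good monopoly partition
  obtain ⟨πs, q, u, hopt, hV1s, hn1eq⟩ := exists_opt_partition v hv hB
  rw [← hp2def] at hV1s
  rw [← hn1def] at hn1eq
  set W : ℕ := p2 + q + u with hWdef
  have hNW : N ≤ m * W := by
    have h1 : 2 * q ≤ m * q := Nat.mul_le_mul_right q hm2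
    have h2 : u ≤ m * u := Nat.le_mul_of_pos_left u (by omega)
    have h3 : m * W = m * p2 + m * q + m * u := by rw [hWdef]; ring
    omega
  -- rationals
  have hcG0 : 0 < (Fintype.card G : ℚ) := by
    have := Fintype.card_pos (α := G)
    exact_mod_cast this
  have hcS0 : 0 < (Fintype.card S : ℚ) := by
    have : 0 < Fintype.card S := by omega
    exact_mod_cast this
  -- π* is revenue-maximizing, so its welfare is at most that of πhat
  have hrev : ∀ π'' : Finpartition (univ : Finset G), rev1 v π'' ≤ rev1 v πs := by
    intro π''
    unfold rev1
    have hc : ∀ ρ : Finpartition (univ : Finset G),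
        ∑ T ∈ ρ.parts, (V2 v (univ : Finset B) T : ℚ) =
          ((∑ T ∈ ρ.parts, V2 v (univ : Finset B) T : ℕ) : ℚ) := by
      intro ρ; push_cast; rfl
    rw [hc, hc]
    apply mul_le_mul_of_nonneg_left _ (le_of_lt (inv_pos.2 hcG0))
    exact_mod_cast hopt π''
  have hSWle : SW1 v πs ≤ SW1 v πhat := hbest πs hrev
  have hSW1s : SW1 v πs = (Fintype.card G : ℚ)⁻¹ * (W : ℚ) := by
    unfold SW1
    congr 1
    rw [show ((W : ℕ) : ℚ) = ((∑ T ∈ πs.parts, V1 v (univ : Finset B) T : ℕ) : ℚ) by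
      rw [hV1s, hWdef]]
    push_cast
    rfl
  have hSWm : (Fintype.card S : ℚ) * SWm v τ σ = (Fintype.card G : ℚ)⁻¹ * (N : ℚ) := by
    unfold SWm
    have hc : (∑ s : S, ∑ T ∈ (τ s).parts, (V1 v (buyersOf σ s) T : ℚ)) = (N : ℚ) := by
      rw [hNdef]; push_cast; rfl
    rw [hc, mul_inv]
    field_simp
  have hmain : (Fintype.card S : ℚ) * SWm v τ σ ≤ (m : ℚ) * SW1 v πhat := by
    rw [hSWm]
    calc (Fintype.card G : ℚ)⁻¹ * (N : ℚ)
        ≤ (Fintype.card G : ℚ)⁻¹ * ((m * W : ℕ) : ℚ) := by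
          apply mul_le_mul_of_nonneg_left _ (le_of_lt (inv_pos.2 hcG0))
          exact_mod_cast hNW
      _ = (m : ℚ) * ((Fintype.card G : ℚ)⁻¹ * (W : ℚ)) := by push_cast; ring
      _ = (m : ℚ) * SW1 v πs := by rw [hSW1s]
      _ ≤ (m : ℚ) * SW1 v πhat := by
          apply mul_le_mul_of_nonneg_left hSWle
          positivity
  have hSWhat_nonneg : 0 ≤ SW1 v πhat := by
    unfold SW1
    apply mul_nonneg (le_of_lt (inv_pos.2 hcG0))
    apply Finset.sum_nonneg
    intro T _
    positivity
  constructor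
  · exact_mod_cast hmain
  · have hmS : (m : ℚ) ≤ (Fintype.card S : ℚ) := by
      have : m ≤ Fintype.card S := min_le_left _ _
      exact_mod_cast this
    have h2 : (Fintype.card S : ℚ) * SWm v τ σ ≤ (Fintype.card S : ℚ) * SW1 v πhat :=
      le_trans hmain (mul_le_mul_of_nonneg_right hmS hSWhat_nonneg)
    exact le_of_mul_le_mul_left h2 hcS0
end

section
/- Suppose |S| ≥ 2, |B| ≥ |S|, and v_b(G) ≥ 1 for every b ∈ B. Then for every single-seller partition π̂ of G, every seller profile τ, and every buyer assignment σ that is a Nash equilibrium for τ, |G|·SW(τ,σ) ≥ SW(π̂); that is, the welfare at any equilibrium of the competitive game is at least a 1/|G| fraction of the welfare achieved by any monopolist. -/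
open Finset

variable {B G S : Type*} [Fintype B] [Fintype G] [Fintype S]
variable [DecidableEq B] [DecidableEq G] [DecidableEq S]

lemma sum_parts_eq {G : Type*} [Fintype G] [DecidableEq G]
    (π : Finpartition (univ : Finset G)) (f : G → ℕ) :
    ∑ Gb ∈ π.parts, ∑ g ∈ Gb, f g = ∑ g, f g := by
  have h : (univ : Finset G) = π.parts.biUnion id := by
    rw [← Finset.sup_eq_biUnion, π.sup_parts]
  calc ∑ Gb ∈ π.parts, ∑ g ∈ Gb, f g
      = ∑ g ∈ π.parts.biUnion id, f g :=
        (Finset.sum_biUnion π.supIndep.pairwiseDisjoint).symm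
    _ = ∑ g, f g := Finset.sum_congr h.symm (fun _ _ => rfl)

lemma V2_singleton' {B G : Type*} [DecidableEq B] (v : B → G → ℕ) (b : B) (Gb : Finset G) :
    V2 v {b} Gb = 0 := by
  simp [V2, V1]

lemma min_le_V2' {B G : Type*} [DecidableEq B] (v : B → G → ℕ) {Bb : Finset B} {a b : B}
    (hab : a ≠ b) (ha : a ∈ Bb) (hb : b ∈ Bb) (Gb : Finset G) :
    min (vsum v a Gb) (vsum v b Gb) ≤ V2 v Bb Gb := by
  rw [V2, dif_pos ⟨a, ha⟩]
  apply Finset.le_inf'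
  intro c _
  rcases eq_or_ne c a with rfl | hca
  · exact le_trans (min_le_right _ _) (Finset.le_sup (f := fun x => vsum v x Gb)
      (Finset.mem_erase.2 ⟨hab.symm, hb⟩))
  · exact le_trans (min_le_left _ _) (Finset.le_sup (f := fun x => vsum v x Gb)
      (Finset.mem_erase.2 ⟨fun h => hca h.symm, ha⟩))

lemma buyersOf_update' {B S : Type*} [Fintype B] [DecidableEq B] [DecidableEq S]
    (σ : B → S) {s0 : S} (h : buyersOf σ s0 = ∅) (b : B) :
    buyersOf (Function.update σ b s0) s0 = {b} := by
  have h' : ∀ x, σ x ≠ s0 := by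
    intro x hx
    exact (Finset.eq_empty_iff_forall_notMem.1 h x) (by simp [buyersOf, hx])
  ext x
  simp only [buyersOf, mem_filter, mem_univ, true_and, mem_singleton]
  rcases eq_or_ne x b with rfl | hx
  · simp
  · simp [Function.update_of_ne hx, h' x, hx]

/-- every equilibrium of the competitive game attains at least
a `1/|G|` fraction of any monopolist's welfare. -/
theorem nash_sw_ge_monopoly_frac [Nonempty B] [Nonempty G] [Nonempty S]
    (v : B → G → ℕ) (hv : ∀ b g, v b g ≤ 1)
    (hS : 2 ≤ Fintype.card S) (hB : Fintype.card S ≤ Fintype.card B)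
    (hdem : ∀ b : B, 1 ≤ vsum v b (univ : Finset G))
    (πhat : Finpartition (univ : Finset G))
    (τ : S → Finpartition (univ : Finset G)) (σ : B → S) (hσ : IsNash v τ σ) :
    SW1 v πhat ≤ (Fintype.card G : ℚ) * SWm v τ σ := by
  have hG : (0:ℚ) < (Fintype.card G : ℚ) := by
    exact_mod_cast Fintype.card_pos
  have hGne : (Fintype.card G : ℚ) ≠ 0 := hG.ne'
  have hSpos : (0:ℚ) < (Fintype.card S : ℚ) := by
    exact_mod_cast Fintype.card_pos
  -- main counting bound
  have hT : Fintype.card S ≤ ∑ s : S, ∑ Gb ∈ (τ s).parts, V1 v (buyersOf σ s) Gb := by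
    by_cases hfull : ∀ s : S, (buyersOf σ s).Nonempty
    · calc Fintype.card S = ∑ _s : S, 1 := by simp
        _ ≤ ∑ s : S, ∑ Gb ∈ (τ s).parts, V1 v (buyersOf σ s) Gb := by
          refine Finset.sum_le_sum fun s _ => ?_
          obtain ⟨b, hb⟩ := hfull s
          calc 1 ≤ vsum v b univ := hdem b
            _ = ∑ Gb ∈ (τ s).parts, vsum v b Gb := (sum_parts_eq (τ s) (v b)).symm
            _ ≤ ∑ Gb ∈ (τ s).parts, V1 v (buyersOf σ s) Gb :=
              Finset.sum_le_sum fun Gb _ => Finset.le_sup (f := fun x => vsum v x Gb) hb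
    · push_neg at hfull
      obtain ⟨s0, hs0⟩ := hfull
      -- every buyer extracts full surplus at equilibrium
      have hdev : ∀ b : B, (vsum v b univ : ℚ) ≤
          ∑ Gb ∈ (τ (σ b)).parts,
            max ((vsum v b Gb : ℚ) - (V2 v (buyersOf σ (σ b)) Gb : ℚ)) 0 := by
        intro b
        have hnash := hσ b s0
        have hbuy : buyersOf (Function.update σ b s0) s0 = {b} := buyersOf_update' σ hs0 b
        have hdev_eq : ubuyer v τ (Function.update σ b s0) b
            = (Fintype.card G : ℚ)⁻¹ * (vsum v b univ : ℚ) := by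
          rw [ubuyer]
          simp only [Function.update_self, hbuy, V2_singleton', Nat.cast_zero, sub_zero]
          rw [Finset.sum_congr rfl (fun Gb _ => max_eq_left (Nat.cast_nonneg _))]
          congr 1
          rw [← Nat.cast_sum]
          exact_mod_cast congrArg (Nat.cast : ℕ → ℚ) (sum_parts_eq (τ s0) (v b))
        rw [hdev_eq, ubuyer] at hnash
        exact (mul_le_mul_iff_of_pos_left (inv_pos.2 hG)).1 hnash
      have hpoint : ∀ b : B, ∀ Gb ∈ (τ (σ b)).parts,
          max ((vsum v b Gb : ℚ) - (V2 v (buyersOf σ (σ b)) Gb : ℚ)) 0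
            = (vsum v b Gb : ℚ) := by
        intro b
        have h1 := hdev b
        have h2 : ∑ Gb ∈ (τ (σ b)).parts, (vsum v b Gb : ℚ) = (vsum v b univ : ℚ) := by
          rw [← Nat.cast_sum]
          exact_mod_cast congrArg (Nat.cast : ℕ → ℚ) (sum_parts_eq (τ (σ b)) (v b))
        have hle : ∀ Gb ∈ (τ (σ b)).parts,
            max ((vsum v b Gb : ℚ) - (V2 v (buyersOf σ (σ b)) Gb : ℚ)) 0
              ≤ (vsum v b Gb : ℚ) := fun Gb _ =>
          max_le (sub_le_self _ (Nat.cast_nonneg _)) (Nat.cast_nonneg _)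
        exact (Finset.sum_eq_sum_iff_of_le hle).1
          (le_antisymm (Finset.sum_le_sum hle) (by rw [h2]; exact h1))
      have hV2z : ∀ b : B, ∀ Gb ∈ (τ (σ b)).parts, 0 < vsum v b Gb →
          V2 v (buyersOf σ (σ b)) Gb = 0 := by
        intro b Gb hGb hpos
        by_contra hne
        have h1 : (1:ℚ) ≤ (V2 v (buyersOf σ (σ b)) Gb : ℚ) := by
          exact_mod_cast Nat.one_le_iff_ne_zero.2 hne
        have h2 : (1:ℚ) ≤ (vsum v b Gb : ℚ) := by exact_mod_cast hpos
        have h := hpoint b Gb hGb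
        have h3 : max ((vsum v b Gb : ℚ) - (V2 v (buyersOf σ (σ b)) Gb : ℚ)) 0
            ≤ (vsum v b Gb : ℚ) - 1 := max_le (by linarith) (by linarith)
        linarith [h ▸ h3]
      have hpart : ∀ s : S, ∀ Gb ∈ (τ s).parts,
          ∑ b ∈ buyersOf σ s, vsum v b Gb ≤ V1 v (buyersOf σ s) Gb := by
        intro s Gb hGb
        by_cases hz : ∀ b ∈ buyersOf σ s, vsum v b Gb = 0
        · rw [Finset.sum_eq_zero hz]; exact Nat.zero_le _
        · push_neg at hz
          obtain ⟨b0, hb0, hb0pos⟩ := hz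
          have hσb0 : σ b0 = s := (Finset.mem_filter.1 hb0).2
          have hz0 : V2 v (buyersOf σ s) Gb = 0 := by
            have := hV2z b0 Gb (by rw [hσb0]; exact hGb) (Nat.pos_of_ne_zero hb0pos)
            rwa [hσb0] at this
          have huniq : ∀ b ∈ buyersOf σ s, b ≠ b0 → vsum v b Gb = 0 := by
            intro b hb hne
            by_contra hbpos
            have hmin := min_le_V2' v hne hb hb0 Gb
            rw [hz0] at hmin
            have h1 : 1 ≤ vsum v b Gb := Nat.one_le_iff_ne_zero.2 hbpos
            have h2 : 1 ≤ vsum v b0 Gb := Nat.one_le_iff_ne_zero.2 hb0pos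
            omega
          rw [Finset.sum_eq_single b0 huniq (fun h => absurd hb0 h)]
          exact Finset.le_sup (f := fun x => vsum v x Gb) hb0
      have hcardB : ∑ s : S, (buyersOf σ s).card = Fintype.card B := by
        rw [← Finset.card_univ]
        exact (Finset.card_eq_sum_card_fiberwise (fun x _ => Finset.mem_univ (σ x))).symm
      calc Fintype.card S ≤ Fintype.card B := hB
        _ = ∑ s : S, (buyersOf σ s).card := hcardB.symm
        _ ≤ ∑ s : S, ∑ Gb ∈ (τ s).parts, V1 v (buyersOf σ s) Gb := by
          refine Finset.sum_le_sum fun s _ => ?_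
          calc (buyersOf σ s).card = ∑ _b ∈ buyersOf σ s, 1 := by simp
            _ ≤ ∑ b ∈ buyersOf σ s, vsum v b univ :=
              Finset.sum_le_sum fun b _ => hdem b
            _ = ∑ b ∈ buyersOf σ s, ∑ Gb ∈ (τ s).parts, vsum v b Gb :=
              Finset.sum_congr rfl fun b _ => (sum_parts_eq (τ s) (v b)).symm
            _ = ∑ Gb ∈ (τ s).parts, ∑ b ∈ buyersOf σ s, vsum v b Gb := Finset.sum_comm
            _ ≤ ∑ Gb ∈ (τ s).parts, V1 v (buyersOf σ s) Gb :=
              Finset.sum_le_sum fun Gb hGb => hpart s Gb hGb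
  -- SW1 ≤ 1
  have hSW1 : SW1 v πhat ≤ 1 := by
    rw [SW1]
    have hnat : ∑ Gb ∈ πhat.parts, V1 v (univ : Finset B) Gb ≤ Fintype.card G := by
      calc ∑ Gb ∈ πhat.parts, V1 v (univ : Finset B) Gb
          ≤ ∑ Gb ∈ πhat.parts, Gb.card := by
            refine Finset.sum_le_sum fun Gb _ => ?_
            refine Finset.sup_le fun b _ => ?_
            calc vsum v b Gb ≤ ∑ _g ∈ Gb, 1 := Finset.sum_le_sum fun g _ => hv b g
              _ = Gb.card := by simp
        _ = Fintype.card G := by rw [πhat.sum_card_parts, Finset.card_univ]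
    have hq : ∑ Gb ∈ πhat.parts, (V1 v (univ : Finset B) Gb : ℚ) ≤ (Fintype.card G : ℚ) := by
      rw [← Nat.cast_sum]; exact_mod_cast hnat
    calc (Fintype.card G : ℚ)⁻¹ * ∑ Gb ∈ πhat.parts, (V1 v (univ : Finset B) Gb : ℚ)
        ≤ (Fintype.card G : ℚ)⁻¹ * (Fintype.card G : ℚ) :=
          mul_le_mul_of_nonneg_left hq (inv_nonneg.2 hG.le)
      _ = 1 := inv_mul_cancel₀ hGne
  have hTQ : (Fintype.card S : ℚ) ≤
      ∑ s : S, ∑ Gb ∈ (τ s).parts, (V1 v (buyersOf σ s) Gb : ℚ) := by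
    push_cast [← Nat.cast_sum]
    exact_mod_cast hT
  calc SW1 v πhat ≤ 1 := hSW1
    _ ≤ (Fintype.card S : ℚ)⁻¹ *
        ∑ s : S, ∑ Gb ∈ (τ s).parts, (V1 v (buyersOf σ s) Gb : ℚ) := by
      rw [← inv_mul_cancel₀ hSpos.ne']
      exact mul_le_mul_of_nonneg_left hTQ (inv_nonneg.2 hSpos.le)
    _ = (Fintype.card G : ℚ) * SWm v τ σ := by
      rw [SWm, mul_inv]
      field_simp
end
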